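/- Let C > 0, ε > 0, m ∈ ℕ and y ∈ ℝ^m with ‖y‖_∞ ≤ C, i.e. |y_i| ≤ C for all i. Then the supremum over x ∈ ℝ^m of ⟨x, y⟩ − C·∑_{i=1}^m max(0, |x_i| − ε) equals ε·‖y‖₁ = ε·∑_{i=1}^m |y_i|. -/

import Mathlib

open RealInnerProductSpace

/-- For `C > 0`, `ε > 0` and `y ∈ ℝ^m` with `|yᵢ| ≤ C` for all `i`, the
supremum over `x ∈ ℝ^m` of `⟨x, y⟩ − C·∑ᵢ max(0, |xᵢ| − ε)` equals `ε·∑ᵢ |yᵢ|`. -/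
theorem stmt_9 (C ε : ℝ) (hC : 0 < C) (hε : 0 < ε) (m : ℕ)
    (y : EuclideanSpace ℝ (Fin m)) (hy : ∀ i : Fin m, |y i| ≤ C) :
    IsLUB (Set.range fun x : EuclideanSpace ℝ (Fin m) =>
      ⟪x, y⟫ - C * ∑ i, max 0 (|x i| - ε)) (ε * ∑ i, |y i|) := by
  constructor
  · rintro _ ⟨x, rfl⟩
    simp only [PiLp.inner_apply, RCLike.inner_apply, conj_trivial]
    rw [Finset.mul_sum, Finset.mul_sum, ← Finset.sum_sub_distrib]
    apply Finset.sum_le_sum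
    intro i _
    have h1 : x i * y i ≤ |x i| * |y i| := by
      calc x i * y i ≤ |x i * y i| := le_abs_self _
        _ = |x i| * |y i| := abs_mul _ _
    have h2 : |x i| ≤ ε + max 0 (|x i| - ε) := by
      rcases le_max_iff.mp (le_refl (max 0 (|x i| - ε))) with _ | _ <;>
      cases le_or_gt (|x i|) ε with
      | inl h => linarith [le_max_left 0 (|x i| - ε)]
      | inr h => linarith [le_max_right 0 (|x i| - ε)]
    have h3 : max 0 (|x i| - ε) * |y i| ≤ C * max 0 (|x i| - ε) := by
      rw [mul_comm C]
      exact mul_le_mul_of_nonneg_left (hy i) (le_max_left _ _)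
    nlinarith [abs_nonneg (y i), abs_nonneg (x i)]
  · intro b hb
    have := hb ⟨(WithLp.toLp 2 (fun i => ε * Real.sign (y i)) : EuclideanSpace ℝ (Fin m)), rfl⟩
    simp only [PiLp.inner_apply, RCLike.inner_apply, conj_trivial, PiLp.toLp_apply, mul_comm (y _)] at this
    have key : ∀ i : Fin m, ε * Real.sign (y i) * y i = ε * |y i| := by
      intro i
      rw [mul_assoc]
      congr 1
      rcases lt_trichotomy (y i) 0 with h | h | h
      · rw [Real.sign_of_neg h, abs_of_neg h]; ring
      · simp [h]
      · rw [Real.sign_of_pos h, abs_of_pos h]; ring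
    have pen : ∀ i : Fin m, max 0 (|ε * Real.sign (y i)| - ε) = 0 := by
      intro i
      apply max_eq_left
      have : |ε * Real.sign (y i)| ≤ ε := by
        rw [abs_mul, abs_of_pos hε]
        have : |Real.sign (y i)| ≤ 1 := by
          rcases Real.sign_apply_eq (y i) with h | h | h <;> simp [h]
        nlinarith
      linarith
    calc ε * ∑ i, |y i| = (∑ i, ε * Real.sign (y i) * y i)
          - C * ∑ i : Fin m, max 0 (|ε * Real.sign (y i)| - ε) := by
          simp only [key, pen, Finset.mul_sum, mul_zero, Finset.sum_const_zero, sub_zero]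
      _ ≤ b := this
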